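/- arXiv:1708.00880 — 4 statements merged into one kernel-verified Lean document; each statement's English description precedes it below -/
import Mathlib

section
/- Let E be a linear operator on a finite-dimensional normed space with ‖E‖ ≤ 1, and suppose for every ℓ ∈ ℕ there is an operator E_{p^ℓ} with ‖E_{p^ℓ}‖ ≤ 1 and (E_{p^ℓ})^{p^ℓ} = E, where p ≥ 2 is fixed. Suppose moreover that the family is 'continuous at 0': for every sequence (n_k, ℓ_k) with n_k / p^{ℓ_k} → 0, the sequence (E_{p^{ℓ_k}})^{n_k} converges to a common limit. Then for every n ≥ 1 there exists an operator E_n in the closed convex hull of {(E_{p^ℓ})^{⌊p^ℓ/n⌋} : ℓ ∈ ℕ} (indeed a limit point of this family) with ‖E_n‖ ≤ 1 and (E_n)^n = E. -/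
theorem p_infinite_divisibility_implies_roots
    (V : Type*) [NormedAddCommGroup V] [NormedSpace ℂ V] [FiniteDimensional ℂ V]
    (p : ℕ) (hp : 2 ≤ p) (E : V →L[ℂ] V) (hE : ‖E‖ ≤ 1)
    (F : ℕ → (V →L[ℂ] V))
    (hFnorm : ∀ ℓ, ‖F ℓ‖ ≤ 1)
    (hFroot : ∀ ℓ, (F ℓ) ^ (p ^ ℓ) = E)
    (hcont : ∃ Q : V →L[ℂ] V, ∀ (nk ℓk : ℕ → ℕ),
      Filter.Tendsto (fun k => (nk k : ℝ) / (p ^ (ℓk k) : ℝ)) Filter.atTop (nhds 0) →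
      Filter.Tendsto (fun k => (F (ℓk k)) ^ (nk k)) Filter.atTop (nhds Q)) :
    ∀ n : ℕ, 1 ≤ n → ∃ En : V →L[ℂ] V,
      En ∈ closure {G | ∃ ℓ : ℕ, G = (F ℓ) ^ (p ^ ℓ / n)} ∧
      ‖En‖ ≤ 1 ∧ En ^ n = E := by
  obtain ⟨Q, hQ⟩ := hcont
  -- Q = 1
  have hQ1 : Q = 1 := by
    have h0 : Filter.Tendsto (fun k : ℕ => ((0 : ℕ) : ℝ) / ((p : ℝ) ^ (0 : ℕ)))
        Filter.atTop (nhds 0) := by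
      simpa using (tendsto_const_nhds : Filter.Tendsto (fun _ : ℕ => (0:ℝ)) Filter.atTop (nhds 0))
    have := hQ (fun _ => 0) (fun _ => 0) (by simpa using h0)
    simpa using (tendsto_nhds_unique tendsto_const_nhds this).symm
  intro n hn
  -- norms of powers are ≤ 1
  have hpownorm : ∀ (ℓ m : ℕ), ‖(F ℓ) ^ m‖ ≤ 1 := by
    intro ℓ m
    induction m with
    | zero => rw [pow_zero]; exact (ContinuousLinearMap.norm_id_le : ‖(1 : V →L[ℂ] V)‖ ≤ 1)
    | succ m ih =>
        rw [pow_succ]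
        calc ‖(F ℓ) ^ m * F ℓ‖ ≤ ‖(F ℓ) ^ m‖ * ‖F ℓ‖ := norm_mul_le _ _
        _ ≤ 1 * 1 := mul_le_mul ih (hFnorm ℓ) (norm_nonneg _) zero_le_one
        _ = 1 := one_mul 1
  -- compactness
  haveI : ProperSpace (V →L[ℂ] V) := FiniteDimensional.proper ℂ _
  have hcomp : IsCompact (Metric.closedBall (0 : V →L[ℂ] V) 1) :=
    isCompact_closedBall 0 1
  set u : ℕ → (V →L[ℂ] V) := fun ℓ => (F ℓ) ^ (p ^ ℓ / n) with hu
  have humem : ∀ ℓ, u ℓ ∈ Metric.closedBall (0 : V →L[ℂ] V) 1 := by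
    intro ℓ; simpa [u, Metric.mem_closedBall, dist_eq_norm] using hpownorm ℓ (p ^ ℓ / n)
  obtain ⟨En, hEnmem, φ, hφ, hconv⟩ := hcomp.tendsto_subseq humem
  refine ⟨En, ?_, ?_, ?_⟩
  · exact mem_closure_of_tendsto hconv
      (Filter.Eventually.of_forall fun k => ⟨φ k, rfl⟩)
  · simpa [Metric.mem_closedBall, dist_eq_norm] using hEnmem
  · -- remainders tend to Q = 1
    have hpφ : Filter.Tendsto (fun k => (p : ℝ) ^ (φ k)) Filter.atTop Filter.atTop := by
      refine (tendsto_pow_atTop_atTop_of_one_lt ?_).comp hφ.tendsto_atTop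
      exact_mod_cast Nat.lt_of_lt_of_le one_lt_two hp
    have hratio : Filter.Tendsto
        (fun k => ((p ^ (φ k) % n : ℕ) : ℝ) / ((p : ℝ) ^ (φ k)))
        Filter.atTop (nhds 0) := by
      have hle : ∀ k, ((p ^ (φ k) % n : ℕ) : ℝ) / ((p : ℝ) ^ (φ k))
          ≤ (n : ℝ) / ((p : ℝ) ^ (φ k)) := by
        intro k
        apply div_le_div_of_nonneg_right ?_ (by positivity)
        exact_mod_cast (Nat.mod_lt _ (Nat.lt_of_lt_of_le Nat.zero_lt_one hn)).le
      have h0le : ∀ k, 0 ≤ ((p ^ (φ k) % n : ℕ) : ℝ) / ((p : ℝ) ^ (φ k)) := by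
        intro k; positivity
      exact squeeze_zero h0le hle (Filter.Tendsto.div_atTop tendsto_const_nhds hpφ)
    have hrem : Filter.Tendsto (fun k => (F (φ k)) ^ (p ^ (φ k) % n))
        Filter.atTop (nhds Q) := by
      have := hQ (fun k => p ^ (φ k) % n) φ (by exact_mod_cast hratio)
      exact this
    -- the key algebraic identity
    have hkey : ∀ k, ((F (φ k)) ^ (p ^ (φ k) / n)) ^ n * (F (φ k)) ^ (p ^ (φ k) % n) = E := by
      intro k
      have hid : p ^ φ k / n * n + p ^ φ k % n = p ^ φ k := Nat.div_add_mod' _ _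
      rw [← pow_mul, ← pow_add, hid]
      exact hFroot (φ k)
    have hmul : Filter.Tendsto
        (fun k => ((F (φ k)) ^ (p ^ (φ k) / n)) ^ n * (F (φ k)) ^ (p ^ (φ k) % n))
        Filter.atTop (nhds (En ^ n * Q)) := by
      exact (hconv.pow n).mul hrem
    have : En ^ n * Q = E := by
      refine tendsto_nhds_unique hmul ?_
      simpa [hkey] using (tendsto_const_nhds : Filter.Tendsto (fun _ : ℕ => E) _ _)
    rw [hQ1, mul_one] at this
    exact this
end

section
/- There is no 2×2-system quantum channel square root of the channel whose matrix representation in the Pauli basis is diag(1, λ, −λ, −1) with 0 < λ < 1; more precisely, any real 4×4 matrix F with F² = diag(1, λ, −λ, −1) must have non-real eigenvalues, while a matrix representing a Hermiticity-preserving map (such as a quantum channel in the Pauli basis) is real and its complex eigenvalues come in conjugate pairs, so F cannot represent a quantum channel. -/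
theorem real_sqrt_of_diag_has_nonreal_eigenvalue
    (l : ℝ) (hl : 0 < l) (hl1 : l < 1)
    (F : Matrix (Fin 4) (Fin 4) ℝ)
    (hF : F ^ 2 = Matrix.diagonal ![1, l, -l, -1]) :
    ∃ μ ∈ spectrum ℂ (F.map (Complex.ofReal)), μ.im ≠ 0 := by
  set Fc := F.map (Complex.ofReal) with hFc
  have hsq : Fc ^ 2 = Matrix.diagonal ![1, (l:ℂ), -l, -1] := by
    have : Fc ^ 2 = (F ^ 2).map (Complex.ofReal) := by
      rw [hFc, pow_two, pow_two]
      exact (Matrix.map_mul (f := Complex.ofRealHom)).symm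
    rw [this, hF]
    ext i j
    by_cases h : i = j <;>
      fin_cases i <;> fin_cases j <;>
        simp_all [Matrix.diagonal, Matrix.map_apply]
  have hmem : (-1 : ℂ) ∈ spectrum ℂ (Fc ^ 2) := by
    rw [hsq, spectrum.mem_iff]
    intro hu
    rw [Matrix.isUnit_iff_isUnit_det] at hu
    have : ((algebraMap ℂ (Matrix (Fin 4) (Fin 4) ℂ)) (-1) -
        Matrix.diagonal ![1, (l:ℂ), -l, -1]).det = 0 := by
      have : (algebraMap ℂ (Matrix (Fin 4) (Fin 4) ℂ)) (-1) -
          Matrix.diagonal ![1, (l:ℂ), -l, -1] =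
          Matrix.diagonal ![(-2 : ℂ), -1 - l, -1 + l, 0] := by
        ext i j
        fin_cases i <;> fin_cases j <;>
          simp [Matrix.algebraMap_eq_diagonal, Matrix.diagonal, Pi.algebraMap_apply] <;> ring
      rw [this, Matrix.det_diagonal]
      simp [Fin.prod_univ_four]
    rw [this] at hu
    exact hu.ne_zero rfl
  rw [spectrum.map_pow_of_pos Fc (by norm_num : 0 < 2)] at hmem
  obtain ⟨μ, hμmem, hμsq⟩ := hmem
  refine ⟨μ, hμmem, fun him => ?_⟩
  have h2 := congrArg Complex.re hμsq
  simp [pow_two, Complex.mul_re, him] at h2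
  nlinarith [sq_nonneg μ.re]
end

section
/- Let P be the m-cycle permutation matrix on ℂ^m (P|i⟩ = |i−1 mod m⟩) extended by zero to a larger space (E = P ⊕ 0). For m ≥ 2, E has no m-th root F (with F^m = E) whose eigenvalues of modulus 1 form a complete set of n-th roots of unity {e^{2πi r/n} : r = 0,…,n−1} for some n. That is, any F with F^m = E has unimodular spectrum consisting of m-th roots of the m-th roots of unity, i.e. m²-th roots of unity, one from each class e^{2πi(r + m k_r)/m²}, and such a set cannot equal a full group of n-th roots of unity for any n when m ≥ 2. -/
lemma spec_iff_eigvec {ι : Type*} [Fintype ι] [DecidableEq ι] {M : Matrix ι ι ℂ} {μ : ℂ} :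
    μ ∈ spectrum ℂ M ↔ ∃ w, w ≠ 0 ∧ M.mulVec w = μ • w := by
  have key : ∀ w : ι → ℂ,
      ((algebraMap ℂ (Matrix ι ι ℂ) μ - M).mulVec w = 0 ↔ M.mulVec w = μ • w) := by
    intro w
    rw [Matrix.sub_mulVec, Algebra.algebraMap_eq_smul_one, Matrix.smul_mulVec,
      Matrix.one_mulVec, sub_eq_zero, eq_comm]
  rw [spectrum.mem_iff, Matrix.isUnit_iff_isUnit_det, isUnit_iff_ne_zero, not_not,
    ← Matrix.exists_mulVec_eq_zero_iff]
  simp only [key, ne_eq, exists_prop]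

lemma real_pow_eq_one {x : ℝ} (hx : 0 ≤ x) {k : ℕ} (hk : k ≠ 0) (h : x ^ k = 1) : x = 1 := by
  rcases lt_trichotomy x 1 with h1 | h1 | h1
  · have := pow_lt_one₀ hx h1 hk
    simp [h] at this
  · exact h1
  · have := one_lt_pow₀ h1 hk
    simp [h] at this

/-- The m-cycle permutation matrix P on ℂ^m, P|i⟩ = |i−1⟩ (mod m). -/
def cycleMatrix (m : ℕ) [NeZero m] : Matrix (ZMod m) (ZMod m) ℂ :=
  fun i j => if j = i + 1 then 1 else 0

/-- mulVec of the cycle matrix is a shift. -/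
lemma cycleMatrix_mulVec (m : ℕ) [NeZero m] (x : ZMod m → ℂ) (i : ZMod m) :
    (cycleMatrix m).mulVec x i = x (i + 1) := by
  simp [cycleMatrix, Matrix.mulVec, dotProduct, ite_mul]

/-- structure of fixed vectors of E = P ⊕ 0. -/
lemma fixed_vec_structure (m D : ℕ) [NeZero m] (v : (ZMod m ⊕ Fin D) → ℂ)
    (hv : (Matrix.fromBlocks (cycleMatrix m) 0 0 0).mulVec v = v) :
    (∀ d, v (Sum.inr d) = 0) ∧ (∀ i, v (Sum.inl i) = v (Sum.inl 0)) := by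
  have hv' : ∀ s, (Matrix.fromBlocks (cycleMatrix m) 0 0 0).mulVec v s = v s := fun s => by
    rw [hv]
  have hinr : ∀ d, v (Sum.inr d) = 0 := by
    intro d
    have := hv' (Sum.inr d)
    rw [show v = Sum.elim (v ∘ Sum.inl) (v ∘ Sum.inr) by
          funext s; cases s <;> rfl] at this
    rw [Matrix.fromBlocks_mulVec] at this
    simpa using this.symm
  have hshift : ∀ i : ZMod m, v (Sum.inl (i + 1)) = v (Sum.inl i) := by
    intro i
    have := hv' (Sum.inl i)
    rw [show v = Sum.elim (v ∘ Sum.inl) (v ∘ Sum.inr) by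
          funext s; cases s <;> rfl] at this
    rw [Matrix.fromBlocks_mulVec] at this
    simpa [cycleMatrix_mulVec] using this
  refine ⟨hinr, ?_⟩
  have hnat : ∀ k : ℕ, v (Sum.inl (k : ZMod m)) = v (Sum.inl 0) := by
    intro k
    induction k with
    | zero => simp
    | succ k ih => push_cast; rw [hshift, ih]
  intro i
  have : ((i.val : ℕ) : ZMod m) = i := ZMod.natCast_rightInverse i
  rw [← this, hnat]

theorem cycle_root_peripheral_spectrum_not_roots_of_unity
    (m D : ℕ) [NeZero m] (hm : 2 ≤ m)
    (F : Matrix (ZMod m ⊕ Fin D) (ZMod m ⊕ Fin D) ℂ)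
    (hF : F ^ m = Matrix.fromBlocks (cycleMatrix m) 0 0 0) :
    ∀ n : ℕ, 1 ≤ n →
      {μ ∈ spectrum ℂ F | ‖μ‖ = 1} ≠ {z : ℂ | z ^ n = 1} := by
  intro n hn hS
  have hm0 : m ≠ 0 := NeZero.ne m
  set E := Matrix.fromBlocks (cycleMatrix m) 0 0 0 with hE
  -- primitive m-th root of unity
  obtain ⟨ζ, hζ⟩ : ∃ ζ : ℂ, IsPrimitiveRoot ζ m :=
    ⟨_, Complex.isPrimitiveRoot_exp m hm0⟩
  have hζm : ζ ^ m = 1 := hζ.pow_eq_one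
  have hζ1 : ζ ≠ 1 := hζ.ne_one (by omega)
  -- ζ is an eigenvalue of E with explicit eigenvector
  have hζE : ζ ∈ spectrum ℂ E := by
    rw [spec_iff_eigvec]
    refine ⟨Sum.elim (fun i : ZMod m => ζ ^ (i.val)) 0, ?_, ?_⟩
    · intro h0
      have := congrFun h0 (Sum.inl 0)
      simp [ZMod.val_zero] at this
    · rw [hE, Matrix.fromBlocks_mulVec]
      funext s
      cases s with
      | inl i =>
        have hval : ζ ^ ((i + 1 : ZMod m).val) = ζ * ζ ^ (i.val) := by
          have h1 : (i + 1 : ZMod m).val = (i.val + 1) % m := by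
            rw [ZMod.val_add, ZMod.val_one'' (by omega)]
          have h2 : ζ ^ ((i.val + 1) % m) = ζ ^ (i.val + 1) := by
            conv_rhs => rw [← Nat.div_add_mod (i.val + 1) m]
            rw [pow_add, pow_mul, hζm, one_pow, one_mul]
          rw [h1, h2, pow_succ, mul_comm]
        simp [cycleMatrix_mulVec, hval]
      | inr d => simp
  -- spectral mapping
  have hmap : spectrum ℂ (F ^ m) = (· ^ m) '' spectrum ℂ F :=
    spectrum.map_pow_of_pos F (by omega)
  rw [hF] at hmap
  obtain ⟨z, hzF, hzm⟩ : ∃ z, z ∈ spectrum ℂ F ∧ z ^ m = ζ := by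
    rw [hmap] at hζE; obtain ⟨z, h1, h2⟩ := hζE; exact ⟨z, h1, h2⟩
  -- |ζ| = 1 and |z| = 1
  have habsζ : ‖ζ‖ = 1 := by
    apply real_pow_eq_one (norm_nonneg ζ) hm0
    rw [← norm_pow, hζm, norm_one]
  have habsz : ‖z‖ = 1 := by
    apply real_pow_eq_one (norm_nonneg z) hm0
    rw [← norm_pow, hzm, habsζ]
  -- z ∈ S, hence z^n = 1, hence ζ^n = 1, hence ζ ∈ S, hence ζ ∈ spectrum F
  have hzS : z ∈ {μ ∈ spectrum ℂ F | ‖μ‖ = 1} := ⟨hzF, habsz⟩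
  rw [hS] at hzS
  have hζn : ζ ^ n = 1 := by
    rw [← hzm, ← pow_mul, mul_comm, pow_mul, hzS, one_pow]
  have hζF : ζ ∈ spectrum ℂ F := by
    have : ζ ∈ {z : ℂ | z ^ n = 1} := hζn
    rw [← hS] at this; exact this.1
  have h1F : (1 : ℂ) ∈ spectrum ℂ F := by
    have : (1 : ℂ) ∈ {z : ℂ | z ^ n = 1} := by simp
    rw [← hS] at this; exact this.1
  -- eigenvectors
  obtain ⟨v₁, hv₁0, hv₁⟩ := spec_iff_eigvec.mp h1F
  obtain ⟨v₂, hv₂0, hv₂⟩ := spec_iff_eigvec.mp hζF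
  -- F^m fixes both
  have hpow : ∀ (μ : ℂ) (v : (ZMod m ⊕ Fin D) → ℂ), F.mulVec v = μ • v →
      ∀ k : ℕ, (F ^ k).mulVec v = μ ^ k • v := by
    intro μ v hμ k
    induction k with
    | zero => simp
    | succ k ih =>
      rw [pow_succ, ← Matrix.mulVec_mulVec, hμ, Matrix.mulVec_smul, ih, smul_smul,
        pow_succ, mul_comm]
  have hfix₁ : E.mulVec v₁ = v₁ := by
    rw [← hF]; rw [hpow 1 v₁ hv₁ m]; simp
  have hfix₂ : E.mulVec v₂ = v₂ := by
    rw [← hF]; rw [hpow ζ v₂ hv₂ m, hζm, one_smul]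
  obtain ⟨hr₁, hl₁⟩ := fixed_vec_structure m D v₁ hfix₁
  obtain ⟨hr₂, hl₂⟩ := fixed_vec_structure m D v₂ hfix₂
  -- v₁(inl 0) ≠ 0
  have hc₁ : v₁ (Sum.inl 0) ≠ 0 := by
    intro hc
    apply hv₁0
    funext s
    cases s with
    | inl i => rw [hl₁ i, hc]; rfl
    | inr d => exact hr₁ d
  -- v₂ = c • v₁
  set c : ℂ := v₂ (Sum.inl 0) / v₁ (Sum.inl 0) with hc
  have hv21 : v₂ = c • v₁ := by
    funext s
    cases s with
    | inl i =>
      rw [hl₂ i]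
      simp only [Pi.smul_apply, smul_eq_mul, hl₁ i, hc]
      field_simp
    | inr d => simp [hr₂ d, hr₁ d]
  -- apply F
  have : ζ • v₂ = v₂ := by
    rw [← hv₂, hv21, Matrix.mulVec_smul, hv₁, one_smul]
  have : ζ = 1 := by
    obtain ⟨s, hs⟩ := Function.ne_iff.mp hv₂0
    have := congrFun this s
    simp only [Pi.smul_apply, smul_eq_mul] at this
    have h' : ζ * v₂ s = 1 * v₂ s := by rw [one_mul]; exact this
    exact mul_right_cancel₀ hs h'
  exact hζ1 this
end

section
/- If a linear map P on a finite-dimensional vector space satisfies P² = P, and L is a linear map with PLP = PL, then for all t ≥ 0, P·e^{tL} = P·e^{tPL} and the family E_t := P e^{tL} satisfies E_s · E_t = E_{s+t} for all s, t ≥ 0. In particular E := P e^{L} satisfies E = (P e^{L/n})^n for every n ≥ 1, i.e., E is infinitely divisible among maps of this form. -/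
open NormedSpace

section Aux

variable {M : Type*} [NormedRing M] [NormedAlgebra ℂ M] [CompleteSpace M]

lemma lmul_exp_tsum (P A : M) :
    P * exp A = ∑' n : ℕ, (Nat.factorial n : ℂ)⁻¹ • (P * A ^ n) := by
  rw [exp_eq_tsum (𝕂 := ℂ)]
  have := (ContinuousLinearMap.mul ℂ M P).map_tsum
    (expSeries_summable' (𝕂 := ℂ) A)
  simpa [mul_smul_comm] using this

lemma sandwich_exp_tsum (P Q A : M) :
    P * exp A * Q = ∑' n : ℕ, (Nat.factorial n : ℂ)⁻¹ • (P * A ^ n * Q) := by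
  rw [exp_eq_tsum (𝕂 := ℂ)]
  have := (((ContinuousLinearMap.mul ℂ M).flip Q).comp
    (ContinuousLinearMap.mul ℂ M P)).map_tsum (expSeries_summable' (𝕂 := ℂ) A)
  simpa [mul_smul_comm, smul_mul_assoc, mul_assoc] using this

end Aux

theorem projected_semigroup_infinitely_divisible
    (V : Type*) [NormedAddCommGroup V] [NormedSpace ℂ V] [FiniteDimensional ℂ V]
    (P L : V →L[ℂ] V) (hP : P * P = P) (hPL : P * L * P = P * L) :
    (∀ t : ℝ, 0 ≤ t → P * exp (t • L) = P * exp (t • (P * L))) ∧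
    (∀ s t : ℝ, 0 ≤ s → 0 ≤ t →
      (P * exp (s • L)) * (P * exp (t • L)) = P * exp ((s + t) • L)) ∧
    (∀ n : ℕ, 1 ≤ n →
      P * exp L = (P * exp (((1 : ℝ) / n) • L)) ^ n) := by
  -- key power identities
  have hpowP : ∀ k : ℕ, P * L ^ k * P = P * L ^ k := by
    intro k
    induction k with
    | zero => simpa using hP
    | succ k ih =>
      calc P * L ^ (k + 1) * P = (P * L ^ k * P) * (L * P) := by
            rw [ih, pow_succ]; noncomm_ring
        _ = P * L ^ k * (P * L * P) := by noncomm_ring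
        _ = P * L ^ (k + 1) := by rw [hPL, show P * L ^ k * (P * L) = (P * L ^ k * P) * L by noncomm_ring, ih, pow_succ]; noncomm_ring
  have hpowPL : ∀ k : ℕ, P * (P * L) ^ k = P * L ^ k := by
    intro k
    induction k with
    | zero => rfl
    | succ k ih =>
      calc P * (P * L) ^ (k + 1) = (P * (P * L) ^ k) * (P * L) := by
            rw [pow_succ]; noncomm_ring
        _ = (P * L ^ k * P) * L := by rw [ih, ← hpowP]; noncomm_ring
        _ = P * L ^ (k + 1) := by rw [hpowP, pow_succ]; noncomm_ring
  -- first statement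
  have h1 : ∀ t : ℝ, P * exp (t • L) = P * exp (t • (P * L)) := by
    intro t
    rw [lmul_exp_tsum, lmul_exp_tsum]
    refine tsum_congr fun n => ?_
    congr 1
    rw [smul_pow, smul_pow, mul_smul_comm, mul_smul_comm, hpowPL]
  -- projection absorption
  have hproj : ∀ u : ℝ, P * exp (u • L) * P = P * exp (u • L) := by
    intro u
    rw [sandwich_exp_tsum, lmul_exp_tsum]
    refine tsum_congr fun n => ?_
    congr 1
    rw [smul_pow, mul_smul_comm, smul_mul_assoc, hpowP]
  -- semigroup property (no sign conditions needed)
  have h2 : ∀ s t : ℝ,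
      (P * exp (s • L)) * (P * exp (t • L)) = P * exp ((s + t) • L) := by
    intro s t
    have hcomm : Commute (s • L) (t • L) :=
      ((Commute.refl L).smul_left s).smul_right t
    calc (P * exp (s • L)) * (P * exp (t • L))
        = (P * exp (s • L) * P) * exp (t • L) := by noncomm_ring
      _ = P * (exp (s • L) * exp (t • L)) := by rw [hproj, mul_assoc]
      _ = P * exp (s • L + t • L) := by
          let +nondep : NormedAlgebra ℚ (V →L[ℂ] V) := .restrictScalars ℚ ℂ (V →L[ℂ] V)
          rw [← exp_add_of_commute hcomm]
      _ = P * exp ((s + t) • L) := by rw [add_smul]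
  refine ⟨fun t _ => h1 t, fun s t _ _ => h2 s t, ?_⟩
  intro n hn
  have hpow : ∀ (t : ℝ) (m : ℕ),
      (P * exp (t • L)) ^ (m + 1) = P * exp (((m + 1 : ℕ) * t) • L) := by
    intro t m
    induction m with
    | zero => simp
    | succ m ih =>
      rw [pow_succ, ih, h2]
      congr 2
      push_cast
      ring
  obtain ⟨m, rfl⟩ : ∃ m, n = m + 1 := ⟨n - 1, (Nat.succ_pred_eq_of_pos hn).symm⟩
  rw [hpow]
  have : ((m + 1 : ℕ) : ℝ) * ((1 : ℝ) / (m + 1 : ℕ)) = 1 := by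
    have : ((m + 1 : ℕ) : ℝ) ≠ 0 := by positivity
    field_simp
  rw [this, one_smul]
end
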